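/- With $Q_n$ defined by the recurrence $Q_{-1}=0$, $Q_0=1$, $Q_{n+1}(x) = (x - d_n)Q_n(x) - \lambda_n^2 Q_{n-1}(x)$ where $d_0 = 1+\alpha$, $d_n = 2 + \alpha/(n+1)$ ($n \ge 1$), $\lambda_n^2 = 1 + \alpha/n$ ($n \ge 1$), the coefficient $a_{1,n}$ of $x^1$ in $Q_n$ satisfies $a_{1,n} = -\frac{n(n+1)}{2(\alpha+1)} a_{0,n}$ for all $n \ge 0$, where $a_{0,n} = (-1)^n \prod_{k=1}^n (1 + \alpha/k)$. -/

import Mathlib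

open Polynomial Finset

private lemma stmt6_coeff0 (a b : ℝ) (p q : ℝ[X]) :
    ((X - C a) * p - C b * q).coeff 0 = -a * p.coeff 0 - b * q.coeff 0 := by
  simp [sub_mul, coeff_sub, coeff_C_mul, mul_coeff_zero]

private lemma stmt6_coeff1 (a b : ℝ) (p q : ℝ[X]) :
    ((X - C a) * p - C b * q).coeff 1 = p.coeff 0 - a * p.coeff 1 - b * q.coeff 1 := by
  simp [sub_mul, coeff_sub, coeff_C_mul, coeff_X_mul]

/-- With `Qₙ` defined by the three-term recurrence, the coefficient
of `x¹` in `Qₙ` satisfies `a_{1,n} = -(n(n+1)/(2(α+1))) a_{0,n}`, where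
`a_{0,n} = (-1)ⁿ ∏_{k=1}^n (1 + α/k)`. -/
theorem stmt6 (α : ℝ) (hα : -1 < α) (Q : ℕ → Polynomial ℝ)
    (hQ0 : Q 0 = 1) (hQ1 : Q 1 = X - C (1 + α))
    (hrec : ∀ n : ℕ, 1 ≤ n →
      Q (n + 1) = (X - C (2 + α / (n + 1))) * Q n - C (1 + α / n) * Q (n - 1)) :
    ∀ n : ℕ, (Q n).coeff 1 =
      -(n * (n + 1) / (2 * (α + 1))) *
        ((-1) ^ n * ∏ k ∈ Finset.Icc 1 n, (1 + α / k)) := by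
  have hα1 : α + 1 ≠ 0 := by linarith
  set A0 : ℕ → ℝ := fun n => (-1) ^ n * ∏ k ∈ Finset.Icc 1 n, (1 + α / k) with hA0
  set A1 : ℕ → ℝ := fun n => -(n * (n + 1) / (2 * (α + 1))) * A0 n with hA1
  have hA0step : ∀ n : ℕ, A0 (n+1) = -(1 + α/(n+1)) * A0 n := by
    intro n
    simp only [hA0]
    rw [Finset.prod_Icc_succ_top (Nat.le_add_left 1 n)]
    push_cast
    ring
  have key : ∀ n : ℕ, ((Q n).coeff 0 = A0 n ∧ (Q n).coeff 1 = A1 n) ∧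
      ((Q (n+1)).coeff 0 = A0 (n+1) ∧ (Q (n+1)).coeff 1 = A1 (n+1)) := by
    intro n
    induction n with
    | zero =>
      refine ⟨⟨by simp [hQ0, hA0], ?_⟩, ?_, ?_⟩
      · rw [hQ0, Polynomial.coeff_one]
        simp [hA1, hA0]
      · simp [hQ1, hA0]
      · simp [hQ1, hA1, hA0, Polynomial.coeff_one]
        field_simp
        ring
    | succ n ih =>
      have h := hrec (n+1) (by omega)
      simp only [Nat.add_sub_cancel] at h
      push_cast at h
      have hn1 : ((n:ℝ) + 1) ≠ 0 := by positivity
      have hn2 : ((n:ℝ) + 2) ≠ 0 := by positivity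
      have hc0 : (Q (n+2)).coeff 0 =
          -(2 + α/(n+2)) * (Q (n+1)).coeff 0 - (1 + α/(n+1)) * (Q n).coeff 0 := by
        rw [show (n:ℕ)+2 = n+1+1 from rfl, h, stmt6_coeff0]
        ring_nf
      have hc1 : (Q (n+2)).coeff 1 =
          (Q (n+1)).coeff 0 - (2 + α/(n+2)) * (Q (n+1)).coeff 1
            - (1 + α/(n+1)) * (Q n).coeff 1 := by
        rw [show (n:ℕ)+2 = n+1+1 from rfl, h, stmt6_coeff1]
        ring_nf
      refine ⟨ih.2, ?_, ?_⟩
      · rw [show n+1+1 = n+2 from rfl, hc0, ih.1.1, ih.2.1, hA0step (n+1), hA0step n]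
        push_cast
        field_simp
        ring
      · rw [show n+1+1 = n+2 from rfl, hc1, ih.1.2, ih.2.1, ih.2.2, hA1]
        simp only [hA0step (n+1), hA0step n]
        push_cast
        field_simp
        ring
  intro n
  exact (key n).1.2
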